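/- Let w_h > 0 and r_h ∈ [0,1] for h = 1,…,K. The maximizer over nondecreasing sequences 0 ≤ F₁ ≤ F₂ ≤ ⋯ ≤ F_K ≤ 1 of Σ_h w_h [r_h log F_h + (1−r_h) log(1−F_h)] coincides with the minimizer over the same monotone class of the weighted least-squares criterion Σ_h w_h (r_h − F_h)², i.e., the isotonic regression of (r_h) with weights (w_h). -/

import Mathlib

open Finset Real Filter

lemma core_suff (K : ℕ) (u f g : ℕ → ℝ)
    (hf : ∀ ⦃i j⦄, i ≤ j → j < K → f i ≤ f j)
    (hg : ∀ ⦃i j⦄, i ≤ j → j < K → g i ≤ g j)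
    (hA : ∀ i < K, ∑ h ∈ (range K).filter (fun h => f h = f i), u h = 0)
    (hB : ∀ i < K, ∑ h ∈ (range K).filter (fun h => f h = f i ∧ i ≤ h), u h ≤ 0) :
    ∑ h ∈ range K, u h * (g h - f h) ≤ 0 := by
  classical
  have hex : ∀ h : ℕ, ∃ k, f k = f h := fun h => ⟨h, rfl⟩
  set ρ : ℕ → ℕ := fun h => Nat.find (hex h) with hρdef
  have hρ_spec : ∀ h, f (ρ h) = f h := fun h => Nat.find_spec (hex h)
  have hρ_le : ∀ h, ρ h ≤ h := fun h => Nat.find_min' (hex h) rfl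
  have hρ_min : ∀ h k, f k = f h → ρ h ≤ k := fun h k hk => Nat.find_min' (hex h) hk
  have hρ_congr : ∀ h k, f k = f h → ρ h = ρ k := by
    intro h k hk
    exact le_antisymm (hρ_min h (ρ k) (by rw [hρ_spec k, hk]))
      (hρ_min k (ρ h) (by rw [hρ_spec h, hk]))
  have split : (∑ h ∈ range K, u h * (g h - f h))
      = (∑ h ∈ range K, u h * (g h - g (ρ h))) + ∑ h ∈ range K, u h * (g (ρ h) - f h) := by
    rw [← Finset.sum_add_distrib]
    exact Finset.sum_congr rfl (fun h _ => by ring)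
  rw [split]
  have part2 : ∑ h ∈ range K, u h * (g (ρ h) - f h) = 0 := by
    rw [← Finset.sum_fiberwise_of_maps_to (g := ρ) (t := range K)
      (fun x hx => mem_range.2 (lt_of_le_of_lt (hρ_le x) (mem_range.1 hx)))]
    apply Finset.sum_eq_zero
    intro v hv
    by_cases hvv : ρ v = v
    · have hset : (range K).filter (fun h => ρ h = v) = (range K).filter (fun h => f h = f v) := by
        apply Finset.filter_congr
        intro h _
        constructor
        · intro hh; rw [← hρ_spec h, hh]
        · intro hh
          have h2 := hρ_congr v h hh
          rw [← h2, hvv]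
      have hterm : ∀ h ∈ (range K).filter (fun h => ρ h = v),
          u h * (g (ρ h) - f h) = u h * (g v - f v) := by
        intro h hh
        simp only [mem_filter] at hh
        have : f h = f v := by rw [← hh.2, hρ_spec]
        rw [hh.2, this]
      rw [Finset.sum_congr rfl hterm, ← Finset.sum_mul, hset, hA v (mem_range.1 hv), zero_mul]
    · have hempty : (range K).filter (fun h => ρ h = v) = ∅ := by
        apply Finset.filter_false_of_mem
        intro h _ hh
        have h1 : f v = f h := by rw [← hh, hρ_spec]
        have h2 : ρ h = ρ v := hρ_congr h v h1
        exact hvv (by rw [← h2, hh])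
      rw [hempty, Finset.sum_empty]
  have part1 : ∑ h ∈ range K, u h * (g h - g (ρ h)) ≤ 0 := by
    have tele : ∀ h ∈ range K, u h * (g h - g (ρ h))
        = ∑ k ∈ range K, (if k ∈ Finset.Ico (ρ h) h then u h * (g (k+1) - g k) else 0) := by
      intro h hh
      have hsub : Finset.Ico (ρ h) h ⊆ range K := by
        intro k hk
        exact mem_range.2 (lt_of_lt_of_le (Finset.mem_Ico.1 hk).2 (le_of_lt (mem_range.1 hh)))
      rw [Finset.sum_ite_mem, Finset.inter_eq_right.2 hsub, ← Finset.mul_sum,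
        Finset.sum_Ico_eq_sub _ (hρ_le h), Finset.sum_range_sub, Finset.sum_range_sub]
      ring
    rw [Finset.sum_congr rfl tele, Finset.sum_comm]
    apply Finset.sum_nonpos
    intro k hk
    rw [← Finset.sum_filter, ← Finset.sum_mul]
    by_cases hne : ((range K).filter (fun h => k ∈ Finset.Ico (ρ h) h)).Nonempty
    · obtain ⟨h0, hh0⟩ := hne
      simp only [mem_filter, Finset.mem_Ico, mem_range] at hh0
      obtain ⟨h0K, ρh0k, kh0⟩ := hh0
      have hk1K : k + 1 < K := lt_of_le_of_lt kh0 h0K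
      have hfh0 : f h0 = f k := by
        have h1 : f (ρ h0) ≤ f k := hf ρh0k (lt_trans kh0 h0K)
        have h2 : f k ≤ f h0 := hf (le_of_lt kh0) h0K
        rw [hρ_spec h0] at h1
        linarith
      have hfk1 : f (k+1) = f k := by
        have h1 : f k ≤ f (k+1) := hf (Nat.le_succ k) hk1K
        have h2 : f (k+1) ≤ f h0 := hf kh0 h0K
        rw [hfh0] at h2
        linarith
      have hset : (range K).filter (fun h => k ∈ Finset.Ico (ρ h) h)
          = (range K).filter (fun h => f h = f (k+1) ∧ k + 1 ≤ h) := by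
        apply Finset.filter_congr
        intro h hhr
        simp only [Finset.mem_Ico, eq_iff_iff]
        constructor
        · rintro ⟨hρk, hkh⟩
          have h1 : f (ρ h) ≤ f k := hf hρk (Nat.lt_of_succ_lt hk1K)
          have h2 : f k ≤ f h := hf (le_of_lt hkh) (mem_range.1 hhr)
          rw [hρ_spec h] at h1
          exact ⟨by rw [hfk1]; linarith, hkh⟩
        · rintro ⟨hfh, hkh⟩
          exact ⟨hρ_min h k (by rw [hfh, hfk1]), hkh⟩
      rw [hset]
      have hs := hB (k+1) hk1K
      have hd : (0:ℝ) ≤ g (k+1) - g k := by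
        have := hg (Nat.le_succ k) hk1K
        linarith
      exact mul_nonpos_of_nonpos_of_nonneg hs hd
    · rw [Finset.not_nonempty_iff_eq_empty] at hne
      rw [hne, Finset.sum_empty, zero_mul]
  linarith

lemma BC_to_P (K : ℕ) (u F : Fin K → ℝ) (hFmono : Monotone F)
    (hA : ∀ i : Fin K, ∑ h ∈ univ.filter (fun h => F h = F i), u h = 0)
    (hB : ∀ i : Fin K, ∑ h ∈ univ.filter (fun h => F h = F i ∧ i ≤ h), u h ≤ 0)
    (G : Fin K → ℝ) (hGmono : Monotone G) :
    ∑ h, u h * (G h - F h) ≤ 0 := by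
  classical
  set u' : ℕ → ℝ := fun n => if hn : n < K then u ⟨n, hn⟩ else 0 with hu'
  set f' : ℕ → ℝ := fun n => if hn : n < K then F ⟨n, hn⟩ else 0 with hf'
  set g' : ℕ → ℝ := fun n => if hn : n < K then G ⟨n, hn⟩ else 0 with hg'
  have hu'v : ∀ i : Fin K, u' i.val = u i := by
    intro i; simp only [hu', i.isLt, dif_pos, Fin.eta]
  have hf'v : ∀ i : Fin K, f' i.val = F i := by
    intro i; simp only [hf', i.isLt, dif_pos, Fin.eta]
  have hg'v : ∀ i : Fin K, g' i.val = G i := by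
    intro i; simp only [hg', i.isLt, dif_pos, Fin.eta]
  have key : ∑ n ∈ range K, u' n * (g' n - f' n) ≤ 0 := by
    apply core_suff
    · intro i j hij hj
      have hi : i < K := lt_of_le_of_lt hij hj
      simp only [hf', dif_pos hi, dif_pos hj]
      exact hFmono (show (⟨i, hi⟩ : Fin K) ≤ ⟨j, hj⟩ from hij)
    · intro i j hij hj
      have hi : i < K := lt_of_le_of_lt hij hj
      simp only [hg', dif_pos hi, dif_pos hj]
      exact hGmono (show (⟨i, hi⟩ : Fin K) ≤ ⟨j, hj⟩ from hij)
    · intro i hi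
      have h0 := hA ⟨i, hi⟩
      rw [Finset.sum_filter] at h0
      rw [Finset.sum_filter, ← Fin.sum_univ_eq_sum_range (fun n => if f' n = f' i then u' n else 0) K]
      have heq : (∑ h : Fin K, if f' (h : ℕ) = f' i then u' (h : ℕ) else 0)
          = ∑ h : Fin K, if F h = F ⟨i, hi⟩ then u h else 0 := by
        apply Finset.sum_congr rfl
        intro h _
        rw [hf'v h, hu'v h, hf'v ⟨i, hi⟩]
      rw [heq]; exact h0
    · intro i hi
      have h0 := hB ⟨i, hi⟩
      rw [Finset.sum_filter] at h0
      rw [Finset.sum_filter, ← Fin.sum_univ_eq_sum_range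
        (fun n => if f' n = f' i ∧ i ≤ n then u' n else 0) K]
      have heq : (∑ h : Fin K, if f' (h : ℕ) = f' i ∧ i ≤ (h : ℕ) then u' (h : ℕ) else 0)
          = ∑ h : Fin K, if F h = F ⟨i, hi⟩ ∧ (⟨i, hi⟩ : Fin K) ≤ h then u h else 0 := by
        apply Finset.sum_congr rfl
        intro h _
        rw [hf'v h, hu'v h, hf'v ⟨i, hi⟩]
        simp [Fin.le_def]
      rw [heq]; exact h0
  rw [← Fin.sum_univ_eq_sum_range (fun n => u' n * (g' n - f' n)) K] at key
  refine le_trans (le_of_eq ?_) key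
  apply Finset.sum_congr rfl
  intro h _
  rw [hu'v h, hf'v h, hg'v h]

lemma eps_exists (K : ℕ) (F : Fin K → ℝ) (hFIoo : ∀ h, F h ∈ Set.Ioo (0:ℝ) 1)
    (i0 : Fin K) : ∃ ε : ℝ, 0 < ε ∧ (∀ h, 0 < F h - ε) ∧ (∀ h, F h + ε < 1) ∧
      (∀ a b : Fin K, F a < F b → F a + ε ≤ F b) := by
  classical
  have hne : (univ : Finset (Fin K)).Nonempty := ⟨i0, mem_univ i0⟩
  set δ := univ.inf' hne (fun h => min (F h) (1 - F h)) with hδ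
  have hδpos : 0 < δ := by
    rw [hδ, Finset.lt_inf'_iff]
    intro h _
    exact lt_min (hFIoo h).1 (by linarith [(hFIoo h).2])
  have hδle : ∀ h, δ ≤ min (F h) (1 - F h) := fun h => Finset.inf'_le _ (mem_univ h)
  set γ := (univ ×ˢ univ).inf' (hne.product hne)
      (fun p : Fin K × Fin K => if F p.1 < F p.2 then F p.2 - F p.1 else 1) with hγ
  have hγpos : 0 < γ := by
    rw [hγ, Finset.lt_inf'_iff]
    intro p _
    by_cases hp : F p.1 < F p.2
    · rw [if_pos hp]; linarith
    · rw [if_neg hp]; norm_num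
  have hγle : ∀ a b : Fin K, F a < F b → γ ≤ F b - F a := by
    intro a b hab
    have := Finset.inf'_le (f := fun p : Fin K × Fin K =>
      if F p.1 < F p.2 then F p.2 - F p.1 else 1) (b := (a, b)) (Finset.mem_product.2 ⟨mem_univ a, mem_univ b⟩)
    rwa [if_pos hab] at this
  refine ⟨min δ γ / 2, by positivity, ?_, ?_, ?_⟩
  · intro h
    have h1 : min δ γ / 2 < δ := by
      have : min δ γ ≤ δ := min_le_left _ _
      linarith
    have := hδle h
    have := min_le_left (F h) (1 - F h)
    linarith [min_le_left (F h) (1 - F h), hδle h]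
  · intro h
    have h1 : min δ γ / 2 < δ := by
      have : min δ γ ≤ δ := min_le_left _ _
      linarith
    linarith [min_le_right (F h) (1 - F h), hδle h]
  · intro a b hab
    have h1 : min δ γ / 2 < γ := by
      have : min δ γ ≤ γ := min_le_right _ _
      linarith
    linarith [hγle a b hab]

lemma perturb_le (K : ℕ) (u F : Fin K → ℝ) (hFmono : Monotone F)
    (hFIoo : ∀ h, F h ∈ Set.Ioo (0:ℝ) 1)
    (hP : ∀ G : Fin K → ℝ, Monotone G → (∀ h, G h ∈ Set.Ioo (0:ℝ) 1) →
      ∑ h, u h * (G h - F h) ≤ 0)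
    (p : Fin K → Prop) [DecidablePred p] (i0 : Fin K)
    (hup : ∀ ⦃h1 h2 : Fin K⦄, h1 ≤ h2 → p h1 → ¬ p h2 → F h1 < F h2) :
    ∑ h ∈ univ.filter p, u h ≤ 0 := by
  obtain ⟨ε, hε, hlo, hhi, hgap⟩ := eps_exists K F hFIoo i0
  set G : Fin K → ℝ := fun h => if p h then F h + ε else F h with hG
  have hmono : Monotone G := by
    intro h1 h2 h12
    by_cases hp1 : p h1 <;> by_cases hp2 : p h2 <;> simp only [hG, if_pos, if_neg, hp1, hp2, if_true, if_false]
    · linarith [hFmono h12]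
    · exact hgap _ _ (hup h12 hp1 hp2)
    · linarith [hFmono h12]
    · exact hFmono h12
  have hIoo : ∀ h, G h ∈ Set.Ioo (0:ℝ) 1 := by
    intro h
    by_cases hp : p h <;> simp only [hG, hp, if_true, if_false]
    · exact ⟨by linarith [(hFIoo h).1], hhi h⟩
    · exact hFIoo h
  have := hP G hmono hIoo
  have heq : ∑ h, u h * (G h - F h) = (∑ h ∈ univ.filter p, u h) * ε := by
    rw [Finset.sum_filter, Finset.sum_mul]
    apply Finset.sum_congr rfl
    intro h _
    by_cases hp : p h <;> simp only [hG, hp, if_true, if_false] <;> ring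
  rw [heq] at this
  by_contra hcon
  push_neg at hcon
  nlinarith

lemma perturb_ge (K : ℕ) (u F : Fin K → ℝ) (hFmono : Monotone F)
    (hFIoo : ∀ h, F h ∈ Set.Ioo (0:ℝ) 1)
    (hP : ∀ G : Fin K → ℝ, Monotone G → (∀ h, G h ∈ Set.Ioo (0:ℝ) 1) →
      ∑ h, u h * (G h - F h) ≤ 0)
    (p : Fin K → Prop) [DecidablePred p] (i0 : Fin K)
    (hdown : ∀ ⦃h1 h2 : Fin K⦄, h1 ≤ h2 → ¬ p h1 → p h2 → F h1 < F h2) :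
    0 ≤ ∑ h ∈ univ.filter p, u h := by
  obtain ⟨ε, hε, hlo, hhi, hgap⟩ := eps_exists K F hFIoo i0
  set G : Fin K → ℝ := fun h => if p h then F h - ε else F h with hG
  have hmono : Monotone G := by
    intro h1 h2 h12
    by_cases hp1 : p h1 <;> by_cases hp2 : p h2 <;> simp only [hG, if_pos, if_neg, hp1, hp2, if_true, if_false]
    · linarith [hFmono h12]
    · linarith [hFmono h12]
    · linarith [hgap _ _ (hdown h12 hp1 hp2)]
    · exact hFmono h12
  have hIoo : ∀ h, G h ∈ Set.Ioo (0:ℝ) 1 := by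
    intro h
    by_cases hp : p h <;> simp only [hG, hp, if_true, if_false]
    · exact ⟨by linarith [hlo h], by linarith [(hFIoo h).2]⟩
    · exact hFIoo h
  have := hP G hmono hIoo
  have heq : ∑ h, u h * (G h - F h) = (∑ h ∈ univ.filter p, u h) * (-ε) := by
    rw [Finset.sum_filter, Finset.sum_mul]
    apply Finset.sum_congr rfl
    intro h _
    by_cases hp : p h <;> simp only [hG, hp, if_true, if_false] <;> ring
  rw [heq] at this
  by_contra hcon
  push_neg at hcon
  nlinarith

lemma P_to_BC (K : ℕ) (u F : Fin K → ℝ) (hFmono : Monotone F)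
    (hFIoo : ∀ h, F h ∈ Set.Ioo (0:ℝ) 1)
    (hP : ∀ G : Fin K → ℝ, Monotone G → (∀ h, G h ∈ Set.Ioo (0:ℝ) 1) →
      ∑ h, u h * (G h - F h) ≤ 0) :
    (∀ i : Fin K, ∑ h ∈ univ.filter (fun h => F h = F i), u h = 0) ∧
    (∀ i : Fin K, ∑ h ∈ univ.filter (fun h => F h = F i ∧ i ≤ h), u h ≤ 0) := by
  classical
  constructor
  · intro i
    apply le_antisymm
    · apply perturb_le K u F hFmono hFIoo hP _ i
      intro h1 h2 h12 hp1 hp2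
      exact lt_of_le_of_ne (hFmono h12) (fun hcon => hp2 (by rw [← hcon, hp1]))
    · apply perturb_ge K u F hFmono hFIoo hP _ i
      intro h1 h2 h12 hp1 hp2
      exact lt_of_le_of_ne (hFmono h12) (fun hcon => hp1 (by rw [hcon, hp2]))
  · intro i
    apply perturb_le K u F hFmono hFIoo hP _ i
    intro h1 h2 h12 hp1 hp2
    have hi2 : i ≤ h2 := le_trans hp1.2 h12
    have hne : F h2 ≠ F i := fun hcon => hp2 ⟨hcon, hi2⟩
    exact lt_of_le_of_ne (hFmono h12) (fun hcon => hne (by rw [← hcon, hp1.1]))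

lemma mix_mem (K : ℕ) (F G : Fin K → ℝ) (hFm : Monotone F)
    (hFI : ∀ h, F h ∈ Set.Ioo (0:ℝ) 1) (hGm : Monotone G)
    (hGI : ∀ h, G h ∈ Set.Ioo (0:ℝ) 1) (t : ℝ) (ht0 : 0 < t) (ht1 : t ≤ 1) :
    Monotone (fun h => F h + t * (G h - F h)) ∧
      ∀ h, F h + t * (G h - F h) ∈ Set.Ioo (0:ℝ) 1 := by
  constructor
  · intro a b hab
    have h1 := hFm hab
    have h2 := hGm hab
    simp only
    nlinarith
  · intro h
    obtain ⟨hF0, hF1⟩ := hFI h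
    obtain ⟨hG0, hG1⟩ := hGI h
    constructor
    · nlinarith [mul_nonneg (by linarith : (0:ℝ) ≤ 1 - t) hF0.le, mul_pos ht0 hG0]
    · nlinarith [mul_nonneg (by linarith : (0:ℝ) ≤ 1 - t) (by linarith : (0:ℝ) ≤ 1 - F h),
        mul_pos ht0 (by linarith : (0:ℝ) < 1 - G h)]

lemma expand_quad (K : ℕ) (w r F G : Fin K → ℝ) :
    ∑ h, w h * (r h - G h)^2 = (∑ h, w h * (r h - F h)^2)
      + (∑ h, w h * (G h - F h)^2)
      - 2 * ∑ h, (w h * (r h - F h)) * (G h - F h) := by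
  rw [Finset.mul_sum, ← Finset.sum_add_distrib, ← Finset.sum_sub_distrib]
  exact Finset.sum_congr rfl fun h _ => by ring

lemma Q_iff (K : ℕ) (w r F : Fin K → ℝ) (hw : ∀ h, 0 < w h)
    (hFm : Monotone F) (hFI : ∀ h, F h ∈ Set.Ioo (0:ℝ) 1) :
    IsMinOn (fun G : Fin K → ℝ => ∑ h, w h * (r h - G h)^2)
      {F : Fin K → ℝ | Monotone F ∧ ∀ h, F h ∈ Set.Ioo (0:ℝ) 1} F ↔
    ∀ G : Fin K → ℝ, Monotone G → (∀ h, G h ∈ Set.Ioo (0:ℝ) 1) →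
      ∑ h, (w h * (r h - F h)) * (G h - F h) ≤ 0 := by
  rw [isMinOn_iff]
  constructor
  · intro hmin G hGm hGI
    set S : ℝ := ∑ h, (w h * (r h - F h)) * (G h - F h) with hS
    set M : ℝ := ∑ h, w h * (G h - F h)^2 with hM
    have hM0 : 0 ≤ M := Finset.sum_nonneg fun h _ => mul_nonneg (hw h).le (sq_nonneg _)
    have key : ∀ t : ℝ, 0 < t → t ≤ 1 → 0 ≤ t^2 * M - 2 * t * S := by
      intro t ht0 ht1
      obtain ⟨hmono, hIoo⟩ := mix_mem K F G hFm hFI hGm hGI t ht0 ht1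
      have hle := hmin _ (Set.mem_setOf.2 ⟨hmono, hIoo⟩)
      have hexp := expand_quad K w r F (fun h => F h + t * (G h - F h))
      have hMt : ∑ h, w h * ((F h + t * (G h - F h)) - F h)^2 = t^2 * M := by
        rw [hM, Finset.mul_sum]
        exact Finset.sum_congr rfl fun h _ => by ring
      have hSt : ∑ h, (w h * (r h - F h)) * ((F h + t * (G h - F h)) - F h) = t * S := by
        rw [hS, Finset.mul_sum]
        exact Finset.sum_congr rfl fun h _ => by ring
      rw [hMt, hSt] at hexp
      rw [hexp] at hle
      linarith
    by_contra hcon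
    push_neg at hcon
    set t : ℝ := min 1 (S / (M + S)) with htdef
    have hMS : 0 < M + S := by linarith
    have ht0 : 0 < t := lt_min one_pos (div_pos hcon hMS)
    have ht1 : t ≤ 1 := min_le_left _ _
    have htS : t * (M + S) ≤ S := by
      have : t ≤ S / (M + S) := min_le_right _ _
      calc t * (M + S) ≤ (S / (M + S)) * (M + S) := by nlinarith
        _ = S := by field_simp
    have := key t ht0 ht1
    nlinarith [mul_pos ht0 hcon, mul_le_mul_of_nonneg_left htS ht0.le]
  · intro hP G hG
    obtain ⟨hGm, hGI⟩ := hG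
    have hexp := expand_quad K w r F G
    have hM0 : 0 ≤ ∑ h, w h * (G h - F h)^2 :=
      Finset.sum_nonneg fun h _ => mul_nonneg (hw h).le (sq_nonneg _)
    have hS := hP G hGm hGI
    show (∑ h, w h * (r h - F h)^2) ≤ ∑ h, w h * (r h - G h)^2
    rw [hexp]
    linarith

lemma log_upper (x y ρ ω : ℝ) (hx : 0 < x) (hx1 : x < 1) (hy : 0 < y) (hy1 : y < 1)
    (hρ0 : 0 ≤ ρ) (hρ1 : ρ ≤ 1) (hω : 0 ≤ ω) :
    ω * (ρ * Real.log y + (1 - ρ) * Real.log (1 - y)) ≤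
      ω * (ρ * Real.log x + (1 - ρ) * Real.log (1 - x))
        + (ω * (ρ - x) / (x * (1 - x))) * (y - x) := by
  have hx' : x ≠ 0 := hx.ne'
  have h1x : (0:ℝ) < 1 - x := by linarith
  have h1y : (0:ℝ) < 1 - y := by linarith
  have h1 : Real.log y - Real.log x ≤ y / x - 1 := by
    have := Real.log_le_sub_one_of_pos (div_pos hy hx)
    rwa [Real.log_div hy.ne' hx.ne'] at this
  have h2 : Real.log (1 - y) - Real.log (1 - x) ≤ (1 - y) / (1 - x) - 1 := by
    have := Real.log_le_sub_one_of_pos (div_pos h1y h1x)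
    rwa [Real.log_div h1y.ne' h1x.ne'] at this
  have keyid : ρ * (y / x - 1) + (1 - ρ) * ((1 - y) / (1 - x) - 1)
      = (ρ - x) / (x * (1 - x)) * (y - x) := by
    field_simp
    ring
  have h3 : ρ * (Real.log y - Real.log x) + (1 - ρ) * (Real.log (1 - y) - Real.log (1 - x))
      ≤ (ρ - x) / (x * (1 - x)) * (y - x) := by
    calc ρ * (Real.log y - Real.log x) + (1 - ρ) * (Real.log (1 - y) - Real.log (1 - x))
        ≤ ρ * (y / x - 1) + (1 - ρ) * ((1 - y) / (1 - x) - 1) :=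
          add_le_add (mul_le_mul_of_nonneg_left h1 hρ0)
            (mul_le_mul_of_nonneg_left h2 (by linarith))
      _ = _ := keyid
  have h4 := mul_le_mul_of_nonneg_left h3 hω
  have h5 : (ω * (ρ - x) / (x * (1 - x))) * (y - x)
      = ω * ((ρ - x) / (x * (1 - x)) * (y - x)) := by ring
  rw [h5]
  nlinarith [h4]

lemma log_lower (x d ρ ω t : ℝ) (hx : 0 < x) (hx1 : x < 1)
    (hxt : 0 < x + t * d) (hxt1 : x + t * d < 1)
    (hρ0 : 0 ≤ ρ) (hρ1 : ρ ≤ 1) (hω : 0 ≤ ω) :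
    t * (ω * (ρ * d / (x + t * d) - (1 - ρ) * d / (1 - x - t * d))) ≤
      ω * (ρ * Real.log (x + t * d) + (1 - ρ) * Real.log (1 - (x + t * d)))
        - ω * (ρ * Real.log x + (1 - ρ) * Real.log (1 - x)) := by
  have h1x : (0:ℝ) < 1 - x := by linarith
  have h1xt : (0:ℝ) < 1 - x - t * d := by linarith
  have h1 : Real.log x - Real.log (x + t * d) ≤ x / (x + t * d) - 1 := by
    have := Real.log_le_sub_one_of_pos (div_pos hx hxt)
    rwa [Real.log_div hx.ne' hxt.ne'] at this
  have h2 : Real.log (1 - x) - Real.log (1 - (x + t * d)) ≤ (1 - x) / (1 - x - t * d) - 1 := by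
    have := Real.log_le_sub_one_of_pos (div_pos h1x h1xt)
    have e : Real.log ((1 - x) / (1 - x - t * d)) = Real.log (1 - x) - Real.log (1 - (x + t*d)) := by
      rw [Real.log_div h1x.ne' h1xt.ne']
      ring_nf
    rw [e] at this
    exact this
  have e1 : 1 - x / (x + t * d) = t * d / (x + t * d) := by field_simp; ring
  have e2 : 1 - (1 - x) / (1 - x - t * d) = -(t * d) / (1 - x - t * d) := by
    field_simp
    ring
  have g1 : ρ * (t * d / (x + t * d)) ≤ ρ * (Real.log (x + t * d) - Real.log x) := by
    apply mul_le_mul_of_nonneg_left _ hρ0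
    linarith [h1, e1]
  have g2 : (1 - ρ) * (-(t * d) / (1 - x - t * d))
      ≤ (1 - ρ) * (Real.log (1 - (x + t * d)) - Real.log (1 - x)) := by
    apply mul_le_mul_of_nonneg_left _ (by linarith : (0:ℝ) ≤ 1 - ρ)
    linarith [h2, e2]
  have h3 := mul_le_mul_of_nonneg_left (add_le_add g1 g2) hω
  have h5 : t * (ω * (ρ * d / (x + t * d) - (1 - ρ) * d / (1 - x - t * d)))
      = ω * (ρ * (t * d / (x + t * d)) + (1 - ρ) * (-(t * d) / (1 - x - t * d))) := by
    ring
  rw [h5]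
  nlinarith [h3]

lemma L_iff (K : ℕ) (w r F : Fin K → ℝ) (hw : ∀ h, 0 < w h)
    (hr : ∀ h, r h ∈ Set.Icc (0:ℝ) 1)
    (hFm : Monotone F) (hFI : ∀ h, F h ∈ Set.Ioo (0:ℝ) 1) :
    IsMaxOn (fun G : Fin K → ℝ =>
        ∑ h, w h * (r h * Real.log (G h) + (1 - r h) * Real.log (1 - G h)))
      {F : Fin K → ℝ | Monotone F ∧ ∀ h, F h ∈ Set.Ioo (0:ℝ) 1} F ↔
    ∀ G : Fin K → ℝ, Monotone G → (∀ h, G h ∈ Set.Ioo (0:ℝ) 1) →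
      ∑ h, (w h * (r h - F h) / (F h * (1 - F h))) * (G h - F h) ≤ 0 := by
  rw [isMaxOn_iff]
  constructor
  · intro hmax G hGm hGI
    set ψ : ℝ → ℝ := fun t => ∑ h, w h * (r h * (G h - F h) / (F h + t * (G h - F h))
        - (1 - r h) * (G h - F h) / (1 - F h - t * (G h - F h))) with hψ
    have hψle : ∀ t : ℝ, 0 < t → t ≤ 1 → ψ t ≤ 0 := by
      intro t ht0 ht1
      obtain ⟨hmono, hIoo⟩ := mix_mem K F G hFm hFI hGm hGI t ht0 ht1
      have hle := hmax (fun h => F h + t * (G h - F h)) (Set.mem_setOf.2 ⟨hmono, hIoo⟩)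
      have hsum : t * ψ t ≤
          (∑ h, w h * (r h * Real.log (F h + t * (G h - F h))
            + (1 - r h) * Real.log (1 - (F h + t * (G h - F h)))))
          - ∑ h, w h * (r h * Real.log (F h) + (1 - r h) * Real.log (1 - F h)) := by
        rw [hψ, Finset.mul_sum, ← Finset.sum_sub_distrib]
        apply Finset.sum_le_sum
        intro h _
        exact log_lower (F h) (G h - F h) (r h) (w h) t (hFI h).1 (hFI h).2
          (hIoo h).1 (hIoo h).2 (hr h).1 (hr h).2 (hw h).le
      have htψ : t * ψ t ≤ 0 := le_trans hsum (by linarith [hle])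
      by_contra hcon
      push_neg at hcon
      nlinarith [mul_pos ht0 hcon]
    have htend : Tendsto ψ (nhdsWithin 0 (Set.Ioi 0))
        (nhds (∑ h, w h * (r h * (G h - F h) / F h - (1 - r h) * (G h - F h) / (1 - F h)))) := by
      apply Filter.Tendsto.mono_left _ nhdsWithin_le_nhds
      rw [hψ]
      apply tendsto_finset_sum
      intro h _
      have c1 : Tendsto (fun t : ℝ => F h + t * (G h - F h)) (nhds 0) (nhds (F h)) := by
        have hc : Continuous (fun t : ℝ => F h + t * (G h - F h)) := by continuity
        simpa using hc.tendsto 0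
      have c2 : Tendsto (fun t : ℝ => 1 - F h - t * (G h - F h)) (nhds 0) (nhds (1 - F h)) := by
        have hc : Continuous (fun t : ℝ => 1 - F h - t * (G h - F h)) := by continuity
        simpa using hc.tendsto 0
      have d1 := Filter.Tendsto.div (tendsto_const_nhds (x := r h * (G h - F h))
        (f := nhds (0:ℝ))) c1 (hFI h).1.ne'
      have d2 := Filter.Tendsto.div (tendsto_const_nhds (x := (1 - r h) * (G h - F h))
        (f := nhds (0:ℝ))) c2 (ne_of_gt (by linarith [(hFI h).2]))
      exact Filter.Tendsto.const_mul (w h) (d1.sub d2)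
    have hev : ∀ᶠ t in nhdsWithin 0 (Set.Ioi 0), ψ t ≤ 0 := by
      filter_upwards [self_mem_nhdsWithin,
        ((eventually_lt_nhds zero_lt_one).filter_mono nhdsWithin_le_nhds :
          ∀ᶠ t in nhdsWithin (0:ℝ) (Set.Ioi 0), t < 1)] with t ht1 ht2
      exact hψle t ht1 (le_of_lt ht2)
    have hlim := le_of_tendsto htend hev
    refine le_trans (le_of_eq ?_) hlim
    apply Finset.sum_congr rfl
    intro h _
    have hx := (hFI h).1
    have hx1 : (0:ℝ) < 1 - F h := by linarith [(hFI h).2]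
    field_simp
    ring
  · intro hP G hG
    obtain ⟨hGm, hGI⟩ := hG
    have key := Finset.sum_le_sum (s := (Finset.univ : Finset (Fin K))) (fun h _ => log_upper (F h) (G h) (r h) (w h)
      (hFI h).1 (hFI h).2 (hGI h).1 (hGI h).2 (hr h).1 (hr h).2 (hw h).le)
    rw [Finset.sum_add_distrib] at key
    show (∑ h, w h * (r h * Real.log (G h) + (1 - r h) * Real.log (1 - G h)))
      ≤ ∑ h, w h * (r h * Real.log (F h) + (1 - r h) * Real.log (1 - F h))
    linarith [key, hP G hGm hGI]


/-- Isotonic-regression reduction used in the M-step: over the monotone class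
`C = {F | Monotone F, F h ∈ (0,1)}`, a point maximizes the weighted Bernoulli
log-likelihood `Σ w_h (r_h log F_h + (1−r_h) log(1−F_h))` iff it minimizes the
weighted least-squares criterion `Σ w_h (r_h − F_h)²` (weighted isotonic
regression of `(r_h)`). -/
theorem stmt12 (K : ℕ) (w r : Fin K → ℝ) (hw : ∀ h, 0 < w h)
    (hr : ∀ h, r h ∈ Set.Icc (0:ℝ) 1)
    (C : Set (Fin K → ℝ))
    (hC : C = {F : Fin K → ℝ | Monotone F ∧ ∀ h, F h ∈ Set.Ioo (0:ℝ) 1})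
    (F : Fin K → ℝ) (hF : F ∈ C) :
    IsMaxOn (fun G : Fin K → ℝ =>
        ∑ h, w h * (r h * Real.log (G h) + (1 - r h) * Real.log (1 - G h))) C F ↔
      IsMinOn (fun G : Fin K → ℝ => ∑ h, w h * (r h - G h)^2) C F := by
  classical
  subst hC
  obtain ⟨hFm, hFI⟩ := hF
  rw [L_iff K w r F hw hr hFm hFI, Q_iff K w r F hw hFm hFI]
  have hcpos : ∀ i : Fin K, (0:ℝ) < (F i * (1 - F i))⁻¹ := by
    intro i
    have h1 := (hFI i).1
    have h2 := (hFI i).2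
    have : (0:ℝ) < F i * (1 - F i) := mul_pos h1 (by linarith)
    exact inv_pos.2 this
  have conv : ∀ (s : Finset (Fin K)) (i : Fin K), (∀ h ∈ s, F h = F i) →
      ∑ h ∈ s, w h * (r h - F h) / (F h * (1 - F h))
        = (F i * (1 - F i))⁻¹ * ∑ h ∈ s, w h * (r h - F h) := by
    intro s i hs
    rw [Finset.mul_sum]
    apply Finset.sum_congr rfl
    intro h hh
    rw [hs h hh]
    ring
  have hmem1 : ∀ (i : Fin K) (h : Fin K), h ∈ univ.filter (fun h => F h = F i) → F h = F i := by
    intro i h hh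
    exact (Finset.mem_filter.1 hh).2
  have hmem2 : ∀ (i : Fin K) (h : Fin K),
      h ∈ univ.filter (fun h => F h = F i ∧ i ≤ h) → F h = F i := by
    intro i h hh
    exact (Finset.mem_filter.1 hh).2.1
  constructor
  · intro hP1 G hGm hGI
    obtain ⟨hA1, hB1⟩ := P_to_BC K (fun h => w h * (r h - F h) / (F h * (1 - F h))) F hFm hFI hP1
    have hA2 : ∀ i : Fin K, ∑ h ∈ univ.filter (fun h => F h = F i), w h * (r h - F h) = 0 := by
      intro i
      have := hA1 i
      rw [conv _ i (hmem1 i)] at this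
      have hc := (hcpos i).ne'
      exact (mul_eq_zero.1 this).resolve_left hc
    have hB2 : ∀ i : Fin K,
        ∑ h ∈ univ.filter (fun h => F h = F i ∧ i ≤ h), w h * (r h - F h) ≤ 0 := by
      intro i
      have := hB1 i
      rw [conv _ i (hmem2 i)] at this
      by_contra hcon
      push_neg at hcon
      nlinarith [mul_pos (hcpos i) hcon]
    exact BC_to_P K (fun h => w h * (r h - F h)) F hFm hA2 hB2 G hGm
  · intro hP2 G hGm hGI
    obtain ⟨hA2, hB2⟩ := P_to_BC K (fun h => w h * (r h - F h)) F hFm hFI hP2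
    have hA1 : ∀ i : Fin K,
        ∑ h ∈ univ.filter (fun h => F h = F i), w h * (r h - F h) / (F h * (1 - F h)) = 0 := by
      intro i
      rw [conv _ i (hmem1 i), hA2 i, mul_zero]
    have hB1 : ∀ i : Fin K,
        ∑ h ∈ univ.filter (fun h => F h = F i ∧ i ≤ h),
          w h * (r h - F h) / (F h * (1 - F h)) ≤ 0 := by
      intro i
      rw [conv _ i (hmem2 i)]
      exact mul_nonpos_of_nonneg_of_nonpos (hcpos i).le (hB2 i)
    exact BC_to_P K (fun h => w h * (r h - F h) / (F h * (1 - F h))) F hFm hA1 hB1 G hGm
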